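/- Let n ≥ 2, c > 0, and let L_u be the n×n Laplacian of the uniformly weighted line graph. For every integer k with 1 ≤ k ≤ n, the vector u_k ∈ ℝⁿ with entries u_k(j) = cos((2j−1)(2k−1)π/(2(2n+1))) for j = 1, …, n satisfies (L_u + c·e_ne_nᵀ) u_k = 2c(1 − cos((2k−1)π/(2n+1))) u_k. Hence the DCT-8 basis vectors are eigenvectors of the generalized graph Laplacian of the line graph with a self-loop of weight c at the last vertex. -/

import Mathlib

open Matrix Real

/-- The combinatorial Laplacian of the uniformly weighted line graph on `n` vertices with
edge weight `c`. -/
def lineLaplacian (n : ℕ) (c : ℝ) : Matrix (Fin n) (Fin n) ℝ :=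
  Matrix.of fun i j =>
    if i = j then (if i.val = 0 ∨ i.val = n - 1 then c else 2 * c)
    else if i.val + 1 = j.val ∨ j.val + 1 = i.val then -c else 0

lemma sum_two' {n : ℕ} (f : Fin n → ℝ) (a b : Fin n) (hab : a ≠ b)
    (h : ∀ j, j ≠ a → j ≠ b → f j = 0) :
    ∑ j, f j = f a + f b := by
  rw [← Finset.sum_subset (Finset.subset_univ ({a, b} : Finset (Fin n)))]
  · rw [Finset.sum_pair hab]
  · intro x _ hx
    simp only [Finset.mem_insert, Finset.mem_singleton, not_or] at hx
    exact h x hx.1 hx.2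

lemma sum_three' {n : ℕ} (f : Fin n → ℝ) (a b c : Fin n) (hab : a ≠ b) (hac : a ≠ c)
    (hbc : b ≠ c)
    (h : ∀ j, j ≠ a → j ≠ b → j ≠ c → f j = 0) :
    ∑ j, f j = f a + f b + f c := by
  rw [← Finset.sum_subset (Finset.subset_univ ({a, b, c} : Finset (Fin n)))]
  · rw [Finset.sum_insert (by simp [hab, hac]), Finset.sum_pair hbc, add_assoc]
  · intro x _ hx
    simp only [Finset.mem_insert, Finset.mem_singleton, not_or] at hx
    exact h x hx.1 hx.2.1 hx.2.2

/-- DCT-8 basis vectors are eigenvectors of the line graph Laplacian with a self-loop of weight `c` at the last vertex. For `1 ≤ k ≤ n` the given vector is an eigenvector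
with the stated eigenvalue. -/
theorem dct8_eigenvectors (n : ℕ) (hn : 2 ≤ n) (c : ℝ) (hc : 0 < c)
    (k : ℕ) (hk1 : 1 ≤ k) (hk2 : k ≤ n) :
    (lineLaplacian n c + Matrix.single (⟨n - 1, by omega⟩ : Fin n) ⟨n - 1, by omega⟩ c) *ᵥ
        (fun j : Fin n => Real.cos ((2 * (j : ℝ) + 1) * (2 * (k : ℝ) - 1) * Real.pi / (2 * (2 * n + 1)))) =
      (2 * c * (1 - Real.cos ((2 * (k : ℝ) - 1) * Real.pi / (2 * n + 1)))) •
        (fun j : Fin n => Real.cos ((2 * (j : ℝ) + 1) * (2 * (k : ℝ) - 1) * Real.pi / (2 * (2 * n + 1)))) := by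
  set θ : ℝ := (2 * (k : ℝ) - 1) * Real.pi / (2 * (2 * (n : ℝ) + 1)) with hθ
  set G : ℝ → ℝ := fun m => Real.cos ((2 * m + 1) * θ) with hGdef
  have hden : (2 * (n : ℝ) + 1) ≠ 0 := by positivity
  have hu : ∀ j : Fin n,
      Real.cos ((2 * (j : ℝ) + 1) * (2 * (k : ℝ) - 1) * Real.pi / (2 * (2 * n + 1))) = G (j : ℝ) := by
    intro j
    simp only [hGdef]
    congr 1
    rw [hθ]
    ring
  have hG : ∀ m : ℝ, G (m - 1) + G (m + 1) = 2 * Real.cos (2 * θ) * G m := by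
    intro m
    simp only [hGdef]
    rw [show (2 * (m - 1) + 1) * θ = (2 * m + 1) * θ - 2 * θ by ring,
      show (2 * (m + 1) + 1) * θ = (2 * m + 1) * θ + 2 * θ by ring,
      Real.cos_sub, Real.cos_add]
    ring
  have hG0 : G (-1) = G 0 := by
    simp only [hGdef]
    rw [show (2 * (-1 : ℝ) + 1) * θ = -((2 * 0 + 1) * θ) by ring, Real.cos_neg]
  have hGn : G n = 0 := by
    simp only [hGdef]
    rw [Real.cos_eq_zero_iff]
    refine ⟨(k : ℤ) - 1, ?_⟩
    rw [hθ]
    push_cast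
    field_simp
    ring
  have hcos2 : Real.cos ((2 * (k : ℝ) - 1) * Real.pi / (2 * n + 1)) = Real.cos (2 * θ) := by
    congr 1
    rw [hθ]
    field_simp
  funext i
  simp only [Matrix.mulVec, dotProduct, Pi.smul_apply, smul_eq_mul, hu, hcos2]
  have hpn : n - 1 < n := by omega
  have main : ∀ f : Fin n → ℝ,
      (f = fun j : Fin n => (lineLaplacian n c
          + Matrix.single (⟨n - 1, hpn⟩ : Fin n) (⟨n - 1, hpn⟩ : Fin n) c) i j * G (j : ℝ)) →
      ∑ x, f x = 2 * c * (1 - Real.cos (2 * θ)) * G (i : ℝ) := by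
    intro f hf
    have hzero : ∀ j : Fin n, j.val ≠ i.val - 1 → j.val ≠ i.val → j.val ≠ i.val + 1 → f j = 0 := by
      intro j h1 h2 h3
      simp only [hf, Matrix.add_apply, lineLaplacian, Matrix.of_apply, Matrix.single,
        Fin.ext_iff, Fin.val_mk, true_or, or_true, and_true, true_and, if_true, if_false]
      split_ifs <;> first | (exfalso; omega) | ring
    by_cases h0 : i.val = 0
    · -- row 0
      rw [sum_two' f ⟨0, by omega⟩ ⟨1, by omega⟩ (by simp only [ne_eq, Fin.mk.injEq]; omega)
        (fun j hj1 hj2 => by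
          have a1 : j.val ≠ 0 := fun h => hj1 (Fin.ext h)
          have a2 : j.val ≠ 1 := fun h => hj2 (Fin.ext h)
          exact hzero j (by omega) (by omega) (by omega))]
      have hfa : f ⟨0, by omega⟩ = c * G 0 := by
        simp only [hf, Matrix.add_apply, lineLaplacian, Matrix.of_apply, Matrix.single,
          Fin.ext_iff, Fin.val_mk, true_or, or_true, and_true, true_and, if_true, if_false]
        split_ifs <;> first | (exfalso; omega) | (push_cast; ring)
      have hfb : f ⟨1, by omega⟩ = -c * G 1 := by
        simp only [hf, Matrix.add_apply, lineLaplacian, Matrix.of_apply, Matrix.single,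
          Fin.ext_iff, Fin.val_mk, true_or, or_true, and_true, true_and, if_true, if_false]
        split_ifs <;> first | (exfalso; omega) | (push_cast; ring)
      rw [hfa, hfb, h0]
      have e1 := hG 0
      rw [show (0 : ℝ) - 1 = -1 by ring, zero_add] at e1
      push_cast
      linear_combination (-c) * e1 + c * hG0
    · by_cases hn1 : i.val = n - 1
      · -- last row
        rw [sum_two' f ⟨n - 2, by omega⟩ ⟨n - 1, hpn⟩ (by simp only [ne_eq, Fin.mk.injEq]; omega)
          (fun j hj1 hj2 => by
            have a1 : j.val ≠ n - 2 := fun h => hj1 (Fin.ext h)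
            have a2 : j.val ≠ n - 1 := fun h => hj2 (Fin.ext h)
            exact hzero j (by omega) (by omega) (by omega))]
        have hfa : f ⟨n - 2, by omega⟩ = -c * G ((n : ℝ) - 2) := by
          simp only [hf, Matrix.add_apply, lineLaplacian, Matrix.of_apply, Matrix.single,
            Fin.ext_iff, Fin.val_mk, true_or, or_true, and_true, true_and, if_true, if_false]
          split_ifs <;> first | (exfalso; omega) | (push_cast [Nat.cast_sub hn]; ring)
        have hfb : f ⟨n - 1, hpn⟩ = (c + c) * G ((n : ℝ) - 1) := by
          simp only [hf, Matrix.add_apply, lineLaplacian, Matrix.of_apply, Matrix.single,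
            Fin.ext_iff, Fin.val_mk, true_or, or_true, and_true, true_and, if_true, if_false]
          split_ifs <;> first | (exfalso; omega) | (push_cast [Nat.cast_sub (by omega : 1 ≤ n)]; ring)
        rw [hfa, hfb]
        have hiv : ((i : ℕ) : ℝ) = (n : ℝ) - 1 := by
          rw [hn1]
          push_cast [Nat.cast_sub (by omega : 1 ≤ n)]
          ring
        rw [hiv]
        have e1 := hG ((n : ℝ) - 1)
        rw [show (n : ℝ) - 1 - 1 = (n : ℝ) - 2 by ring, show (n : ℝ) - 1 + 1 = (n : ℝ) by ring]
          at e1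
        linear_combination (-c) * e1 + c * hGn
      · -- middle rows
        have h1i : 1 ≤ i.val := by omega
        have hi1 : i.val + 1 < n := by omega
        rw [sum_three' f ⟨i.val - 1, by omega⟩ i ⟨i.val + 1, hi1⟩
          (by intro h; have := congrArg Fin.val h; simp only [Fin.val_mk] at this; omega)
          (by simp only [ne_eq, Fin.mk.injEq]; omega)
          (by intro h; have := congrArg Fin.val h; simp only [Fin.val_mk] at this; omega)
          (fun j hj1 hj2 hj3 => by
            have a1 : j.val ≠ i.val - 1 := fun h => hj1 (Fin.ext h)
            have a2 : j.val ≠ i.val := fun h => hj2 (Fin.ext h)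
            have a3 : j.val ≠ i.val + 1 := fun h => hj3 (Fin.ext h)
            exact hzero j a1 a2 a3)]
        have hfa : f ⟨i.val - 1, by omega⟩ = -c * G ((i : ℝ) - 1) := by
          simp only [hf, Matrix.add_apply, lineLaplacian, Matrix.of_apply, Matrix.single,
            Fin.ext_iff, Fin.val_mk, true_or, or_true, and_true, true_and, if_true, if_false]
          split_ifs <;> first | (exfalso; omega) | (push_cast [Nat.cast_sub h1i]; ring)
        have hfb : f i = 2 * c * G (i : ℝ) := by
          simp only [hf, Matrix.add_apply, lineLaplacian, Matrix.of_apply, Matrix.single,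
            Fin.ext_iff, Fin.val_mk, true_or, or_true, and_true, true_and, if_true, if_false]
          split_ifs <;> first | (exfalso; omega) | ring
        have hfc : f ⟨i.val + 1, hi1⟩ = -c * G ((i : ℝ) + 1) := by
          simp only [hf, Matrix.add_apply, lineLaplacian, Matrix.of_apply, Matrix.single,
            Fin.ext_iff, Fin.val_mk, true_or, or_true, and_true, true_and, if_true, if_false]
          split_ifs <;> first | (exfalso; omega) | (push_cast; ring)
        rw [hfa, hfb, hfc]
        linear_combination (-c) * hG ((i : ℕ) : ℝ)
  exact main _ rfl
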